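/- Let G be a finite group, t : G → ℝ positive definite with t_e = 1 and t_g = t_{g⁻¹}. Suppose (A, τ) is a unital C*-algebra with faithful trace carrying an action α of G by trace-preserving automorphisms, and w ∈ A is a self-adjoint unitary such that τ(α(g⁻¹).(w) · w) = t_g for all g ∈ G. In the crossed product (reduced) A ⋊_α G with canonical trace φ̃, set π(λ(g)) = λ(g) and ρ(x) = w π(x) w for x in the group algebra. Then φ̃(π(λ(g)) ρ(λ(h))) = δ_{gh,e} t_g = τ_G(M_t(λ(g)) λ(h)), where M_t is the Fourier multiplier λ(g) ↦ t_g λ(g) and τ_G is the canonical trace on the group von Neumann algebra. -/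

import Mathlib

/-- In a reduced crossed product `A ⋊_α G` (abstractly axiomatized: unitaries
`λ(g)`, an embedding `ι` of `A`, covariance `λ(g) ι(a) λ(g)⁻¹ = ι(α(g).a)`, and canonical
trace `φ̃(ι(a)λ(g)) = τ(a) δ_{g,e}`), if `w` is a self-adjoint unitary of `A` with
`τ(α(g⁻¹).(w)·w) = t_g`, then for `π(λ(g)) = λ(g)` and `ρ(x) = ι(w) π(x) ι(w)` one has
`φ̃(π(λ(g)) ρ(λ(h))) = δ_{gh,e} t_g = τ_G(M_t(λ(g)) λ(h))`. -/
theorem stmt14 {G : Type*} [Group G] [Fintype G] [DecidableEq G]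
    {A B : Type*} [Ring A] [StarRing A] [Algebra ℂ A] [StarModule ℂ A]
    [Ring B] [StarRing B] [Algebra ℂ B] [StarModule ℂ B]
    (t : G → ℝ) (ht1 : t 1 = 1) (htsym : ∀ g : G, t g = t g⁻¹)
    (hpd : ∀ (m : ℕ) (g : Fin m → G) (a : Fin m → ℝ),
      0 ≤ ∑ i, ∑ j, a i * a j * t ((g i)⁻¹ * g j))
    (τ : A →ₗ[ℂ] ℂ) (hτ1 : τ 1 = 1) (htr : ∀ a b, τ (a * b) = τ (b * a))
    (hfaith : ∀ a, τ (star a * a) = 0 → a = 0)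
    (α : G → (A ≃⋆ₐ[ℂ] A)) (hαmul : ∀ (g h : G) (a : A), α g (α h a) = α (g * h) a)
    (hα1 : ∀ a : A, α 1 a = a) (hα : ∀ (g : G) (a : A), τ (α g a) = τ a)
    (w : A) (hwsa : IsSelfAdjoint w) (hwsq : w * w = 1)
    (hwt : ∀ g : G, τ ((α g⁻¹) w * w) = (t g : ℂ))
    (ι : A →⋆ₐ[ℂ] B) (lam : G → B)
    (hlammul : ∀ g h : G, lam g * lam h = lam (g * h))
    (hlamstar : ∀ g : G, star (lam g) = lam g⁻¹) (hlam1 : lam 1 = 1)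
    (hcov : ∀ (g : G) (a : A), lam g * ι a * lam g⁻¹ = ι ((α g) a))
    (φt : B →ₗ[ℂ] ℂ) (hφtfaith : ∀ b, φt (star b * b) = 0 → b = 0)
    (hφttr : ∀ b c, φt (b * c) = φt (c * b))
    (hφt : ∀ (a : A) (g : G), φt (ι a * lam g) = if g = 1 then τ a else 0) :
    ∀ g h : G,
      φt (lam g * (ι w * lam h * ι w)) = (if g * h = 1 then (t g : ℂ) else 0) ∧
      φt (lam g * (ι w * lam h * ι w))
        = ((MonoidAlgebra.single g ((t g : ℂ)) * MonoidAlgebra.single h (1 : ℂ) :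
            MonoidAlgebra ℂ G).coeff 1) := by
  intro g h
  have hinv : ∀ k : G, lam k⁻¹ * lam k = 1 := fun k => by
    rw [hlammul, inv_mul_cancel, hlam1]
  have hswap : ∀ (k : G) (a : A), lam k * ι a = ι (α k a) * lam k := by
    intro k a
    calc lam k * ι a = lam k * ι a * (lam k⁻¹ * lam k) := by rw [hinv, mul_one]
      _ = (lam k * ι a * lam k⁻¹) * lam k := by simp only [mul_assoc]
      _ = ι (α k a) * lam k := by rw [hcov]
  have key : lam g * (ι w * lam h * ι w) = ι (α g w * α (g * h) w) * lam (g * h) := by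
    rw [map_mul]
    calc lam g * (ι w * lam h * ι w)
        = (lam g * ι w) * lam h * ι w := by rw [← mul_assoc, ← mul_assoc]
      _ = ι (α g w) * lam g * lam h * ι w := by rw [hswap]
      _ = ι (α g w) * (lam (g * h) * ι w) := by
          rw [mul_assoc, mul_assoc, ← mul_assoc (lam g), hlammul]
      _ = ι (α g w) * (ι (α (g * h) w) * lam (g * h)) := by rw [hswap]
      _ = ι (α g w) * ι (α (g * h) w) * lam (g * h) := by rw [mul_assoc]
  have main : φt (lam g * (ι w * lam h * ι w)) = if g * h = 1 then (t g : ℂ) else 0 := by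
    rw [key, hφt]
    split_ifs with hgh
    · rw [hgh, hα1]
      have := hwt g⁻¹
      rw [inv_inv] at this
      rw [this]
      exact_mod_cast (htsym g).symm
    · rfl
  refine ⟨main, ?_⟩
  rw [main, MonoidAlgebra.single_mul_single, mul_one]
  rw [MonoidAlgebra.coeff_single_apply]
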